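/- Let C_4 denote the cycle graph on vertices {1,2,3,4}. For every pair of real numbers μ₁ < μ₂, there exists a matrix A ∈ S(C_4) that has the Strong Spectral Property and whose spectrum is the multiset {μ₁, μ₁, μ₂, μ₂} (i.e., A has eigenvalues μ₁ and μ₂, each of multiplicity 2). -/

import Mathlib

open Matrix

/-- The geometric multiplicity of `lam` as an eigenvalue of `A`:
`dim ker (A - lam • I)`. -/
noncomputable def multOf {m : Type*} [Fintype m] [DecidableEq m]
    (A : Matrix m m ℝ) (lam : ℝ) : ℕ :=
  Module.finrank ℝ (LinearMap.ker (A - lam • (1 : Matrix m m ℝ)).mulVecLin)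

/-- The Strong Spectral Property. -/
def HasSSP {m : Type*} [Fintype m] [DecidableEq m] (A : Matrix m m ℝ) : Prop :=
  ∀ X : Matrix m m ℝ, X.IsSymm → Matrix.hadamard A X = 0 →
    Matrix.hadamard (1 : Matrix m m ℝ) X = 0 → A * X - X * A = 0 → X = 0

/-- `A ∈ S(G)`: `A` is symmetric and its off-diagonal nonzero pattern is given by `G`. -/
def InS {m : Type*} [Fintype m] [DecidableEq m]
    (G : SimpleGraph m) (A : Matrix m m ℝ) : Prop :=
  A.IsSymm ∧ ∀ i j, i ≠ j → (A i j ≠ 0 ↔ G.Adj i j)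


/-- The cycle graph `C₄` on vertices `{0,1,2,3}`. -/
def cycle4 : SimpleGraph (Fin 4) :=
  SimpleGraph.fromRel fun i j => (i.val, j.val) ∈ [(0,1), (1,2), (2,3), (0,3)]

namespace C4Aux

noncomputable def Amat (b c : ℝ) : Matrix (Fin 4) (Fin 4) ℝ :=
  !![b, 3*c, 0, 4*c; 3*c, b, 4*c, 0; 0, 4*c, b, -(3*c); 4*c, 0, -(3*c), b]

lemma mulVec_v1 (b c : ℝ) :
    Amat b c *ᵥ ![3, -5, 4, 0] = (b - 5*c) • ![3, -5, 4, 0] := by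
  funext i
  fin_cases i <;>
    simp [Amat, Matrix.mulVec, dotProduct, Fin.sum_univ_four] <;> ring

lemma mulVec_v2 (b c : ℝ) :
    Amat b c *ᵥ ![4, 0, -3, -5] = (b - 5*c) • ![4, 0, -3, -5] := by
  funext i
  fin_cases i <;>
    simp [Amat, Matrix.mulVec, dotProduct, Fin.sum_univ_four] <;> ring

lemma mulVec_w1 (b c : ℝ) :
    Amat b c *ᵥ ![3, 5, 4, 0] = (b + 5*c) • ![3, 5, 4, 0] := by
  funext i
  fin_cases i <;>
    simp [Amat, Matrix.mulVec, dotProduct, Fin.sum_univ_four] <;> ring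

lemma mulVec_w2 (b c : ℝ) :
    Amat b c *ᵥ ![4, 0, -3, 5] = (b + 5*c) • ![4, 0, -3, 5] := by
  funext i
  fin_cases i <;>
    simp [Amat, Matrix.mulVec, dotProduct, Fin.sum_univ_four] <;> ring

lemma quad (b c : ℝ) :
    (Amat b c - (b - 5*c) • (1 : Matrix (Fin 4) (Fin 4) ℝ)) *
      (Amat b c - (b + 5*c) • (1 : Matrix (Fin 4) (Fin 4) ℝ)) = 0 := by
  ext i j
  fin_cases i <;> fin_cases j <;>
    simp [Amat, Matrix.mul_apply, Matrix.one_apply, Fin.sum_univ_four] <;> ring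

lemma mem_ker_iff (b c μ : ℝ) (v : Fin 4 → ℝ) :
    v ∈ LinearMap.ker (Amat b c - μ • (1 : Matrix (Fin 4) (Fin 4) ℝ)).mulVecLin ↔
      Amat b c *ᵥ v = μ • v := by
  simp [LinearMap.mem_ker, Matrix.mulVecLin_apply, Matrix.sub_mulVec,
    Matrix.smul_mulVec, Matrix.one_mulVec, sub_eq_zero]

end C4Aux

namespace C4Aux

lemma span_le_ker (b c μ : ℝ) (x y : Fin 4 → ℝ)
    (hx : Amat b c *ᵥ x = μ • x) (hy : Amat b c *ᵥ y = μ • y) :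
    Submodule.span ℝ (Set.range ![x, y]) ≤
      LinearMap.ker (Amat b c - μ • (1 : Matrix (Fin 4) (Fin 4) ℝ)).mulVecLin := by
  rw [Submodule.span_le]
  rintro v ⟨i, rfl⟩
  fin_cases i
  · exact (mem_ker_iff b c μ x).mpr hx
  · exact (mem_ker_iff b c μ y).mpr hy

lemma two_le_finrank_ker (b c μ : ℝ) (x y : Fin 4 → ℝ)
    (hx : Amat b c *ᵥ x = μ • x) (hy : Amat b c *ᵥ y = μ • y)
    (hind : LinearIndependent ℝ ![x, y]) :
    2 ≤ Module.finrank ℝ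
      (LinearMap.ker (Amat b c - μ • (1 : Matrix (Fin 4) (Fin 4) ℝ)).mulVecLin) := by
  have h1 := finrank_span_eq_card hind
  have h2 := Submodule.finrank_mono (span_le_ker b c μ x y hx hy)
  simp only [Fintype.card_fin] at h1
  omega

lemma inf_ker_eq_bot (b c μ ν : ℝ) (hμν : μ ≠ ν) :
    LinearMap.ker (Amat b c - μ • (1 : Matrix (Fin 4) (Fin 4) ℝ)).mulVecLin ⊓
      LinearMap.ker (Amat b c - ν • (1 : Matrix (Fin 4) (Fin 4) ℝ)).mulVecLin = ⊥ := by
  rw [eq_bot_iff]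
  rintro v ⟨hv1, hv2⟩
  rw [SetLike.mem_coe, mem_ker_iff] at hv1 hv2
  have : (μ - ν) • v = 0 := by rw [sub_smul, hv1.symm.trans hv2, sub_self]
  have hv : v = 0 := (smul_eq_zero.mp this).resolve_left (sub_ne_zero.mpr hμν)
  simp [hv]

end C4Aux

namespace C4Aux

lemma lin_ind_low : LinearIndependent ℝ ![(![3, -5, 4, 0] : Fin 4 → ℝ), ![4, 0, -3, -5]] := by
  rw [linearIndependent_fin2]
  constructor
  · intro hcon
    have := congrFun hcon 3
    norm_num [Matrix.cons_val_three] at this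
  · intro a hcon
    have h1 := congrFun hcon 1
    norm_num at h1

lemma lin_ind_high : LinearIndependent ℝ ![(![3, 5, 4, 0] : Fin 4 → ℝ), ![4, 0, -3, 5]] := by
  rw [linearIndependent_fin2]
  constructor
  · intro hcon
    have := congrFun hcon 3
    norm_num [Matrix.cons_val_three] at this
  · intro a hcon
    have h1 := congrFun hcon 1
    norm_num at h1

lemma finrank_fun4 : Module.finrank ℝ (Fin 4 → ℝ) = 4 := by
  simp [Module.finrank_pi]

lemma mult_eq_two (b c : ℝ) (hc : c ≠ 0) :
    multOf (Amat b c) (b - 5*c) = 2 ∧ multOf (Amat b c) (b + 5*c) = 2 := by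
  set K₁ := LinearMap.ker (Amat b c - (b - 5*c) • (1 : Matrix (Fin 4) (Fin 4) ℝ)).mulVecLin
  set K₂ := LinearMap.ker (Amat b c - (b + 5*c) • (1 : Matrix (Fin 4) (Fin 4) ℝ)).mulVecLin
  have hμν : b - 5*c ≠ b + 5*c := by
    intro hcon
    apply hc
    linarith [hcon]
  have h1 : 2 ≤ Module.finrank ℝ K₁ :=
    two_le_finrank_ker b c _ _ _ (mulVec_v1 b c) (mulVec_v2 b c) lin_ind_low
  have h2 : 2 ≤ Module.finrank ℝ K₂ :=
    two_le_finrank_ker b c _ _ _ (mulVec_w1 b c) (mulVec_w2 b c) lin_ind_high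
  have hsum := Submodule.finrank_sup_add_finrank_inf_eq K₁ K₂
  rw [inf_ker_eq_bot b c _ _ hμν] at hsum
  have hble : Module.finrank ℝ (K₁ ⊔ K₂ : Submodule ℝ (Fin 4 → ℝ)) ≤ 4 := by
    have := Submodule.finrank_le (K₁ ⊔ K₂ : Submodule ℝ (Fin 4 → ℝ))
    rwa [finrank_fun4] at this
  rw [finrank_bot] at hsum
  constructor
  · show Module.finrank ℝ K₁ = 2
    omega
  · show Module.finrank ℝ K₂ = 2
    omega

lemma mult_eq_zero (b c t : ℝ) (ht1 : t ≠ b - 5*c) (ht2 : t ≠ b + 5*c) :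
    multOf (Amat b c) t = 0 := by
  have hker : LinearMap.ker (Amat b c - t • (1 : Matrix (Fin 4) (Fin 4) ℝ)).mulVecLin = ⊥ := by
    rw [eq_bot_iff]
    intro v hv
    rw [mem_ker_iff] at hv
    have h2 : (Amat b c - (b + 5*c) • (1 : Matrix (Fin 4) (Fin 4) ℝ)) *ᵥ v = (t - (b + 5*c)) • v := by
      rw [Matrix.sub_mulVec, Matrix.smul_mulVec, Matrix.one_mulVec, hv, sub_smul]
    have h0 : ((Amat b c - (b - 5*c) • (1 : Matrix (Fin 4) (Fin 4) ℝ)) *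
        (Amat b c - (b + 5*c) • (1 : Matrix (Fin 4) (Fin 4) ℝ))) *ᵥ v = 0 := by
      rw [quad b c, Matrix.zero_mulVec]
    rw [← Matrix.mulVec_mulVec, h2, Matrix.mulVec_smul, Matrix.sub_mulVec,
      Matrix.smul_mulVec, Matrix.one_mulVec, hv, ← sub_smul, smul_smul] at h0
    have hv0 : v = 0 := by
      rcases smul_eq_zero.mp h0 with h | h
      · exact absurd h (mul_ne_zero (sub_ne_zero.mpr ht2) (sub_ne_zero.mpr ht1))
      · exact h
    simp [hv0]
  show Module.finrank ℝ (LinearMap.ker (Amat b c - t • (1 : Matrix (Fin 4) (Fin 4) ℝ)).mulVecLin) = 0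
  rw [hker, finrank_bot]

end C4Aux

namespace C4Aux

lemma inS (b c : ℝ) (hc : c ≠ 0) : InS cycle4 (Amat b c) := by
  constructor
  · show (Amat b c)ᵀ = Amat b c
    ext i j
    fin_cases i <;> fin_cases j <;> simp [Amat]
  · intro i j hij
    fin_cases i <;> fin_cases j <;>
      simp_all [Amat, cycle4, SimpleGraph.fromRel_adj, hc] <;> decide

lemma ssp (b c : ℝ) (hc : c ≠ 0) : HasSSP (Amat b c) := by
  intro X hs hA hI hcomm
  have entry : ∀ i j : Fin 4, Amat b c i j * X i j = 0 := by
    intro i j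
    have := congrFun (congrFun hA i) j
    simpa [Matrix.hadamard] using this
  have diag : ∀ i : Fin 4, X i i = 0 := by
    intro i
    have := congrFun (congrFun hI i) i
    simpa [Matrix.hadamard, Matrix.one_apply] using this
  have h01 : X 0 1 = 0 := by have := entry 0 1; simp [Amat, mul_eq_zero, hc] at this; exact this
  have h10 : X 1 0 = 0 := by have := entry 1 0; simp [Amat, mul_eq_zero, hc] at this; exact this
  have h12 : X 1 2 = 0 := by have := entry 1 2; simp [Amat, mul_eq_zero, hc] at this; exact this
  have h21 : X 2 1 = 0 := by have := entry 2 1; simp [Amat, mul_eq_zero, hc] at this; exact this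
  have h23 : X 2 3 = 0 := by have := entry 2 3; simp [Amat, mul_eq_zero, hc] at this; exact this
  have h32 : X 3 2 = 0 := by have := entry 3 2; simp [Amat, mul_eq_zero, hc] at this; exact this
  have h03 : X 0 3 = 0 := by have := entry 0 3; simp [Amat, mul_eq_zero, hc] at this; exact this
  have h30 : X 3 0 = 0 := by have := entry 3 0; simp [Amat, mul_eq_zero, hc] at this; exact this
  have hs20 : X 2 0 = X 0 2 := congrFun (congrFun hs 0) 2
  have hs31 : X 3 1 = X 1 3 := congrFun (congrFun hs 1) 3
  have e1 := congrFun (congrFun hcomm 0) 1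
  have e2 := congrFun (congrFun hcomm 0) 3
  simp only [Matrix.sub_apply, Matrix.mul_apply, Fin.sum_univ_four, Matrix.zero_apply] at e1 e2
  simp [Amat, h01, h10, h12, h21, h23, h32, h03, h30, hs20, hs31, diag] at e1 e2
  have hp : X 0 2 = 0 := by
    have h24 : (24*c) * X 0 2 = 0 := by nlinarith [e1, e2]
    rcases mul_eq_zero.mp h24 with hx | hx
    · exact absurd hx (by simpa using hc)
    · exact hx
  have hq : X 1 3 = 0 := by
    have h24 : (24*c) * X 1 3 = 0 := by nlinarith [e1, e2]
    rcases mul_eq_zero.mp h24 with hx | hx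
    · exact absurd hx (by simpa using hc)
    · exact hx
  ext i j
  fin_cases i <;> fin_cases j <;>
    simp_all

end C4Aux

/-- For every `μ₁ < μ₂` there is an SSP matrix in `S(C₄)` with spectrum
`{μ₁, μ₁, μ₂, μ₂}`. -/
theorem c4_oml22_spectrally_arbitrary_SSP (μ₁ μ₂ : ℝ) (h : μ₁ < μ₂) :
    ∃ A : Matrix (Fin 4) (Fin 4) ℝ, InS cycle4 A ∧ HasSSP A ∧
      multOf A μ₁ = 2 ∧ multOf A μ₂ = 2 ∧
      ∀ t, t ≠ μ₁ → t ≠ μ₂ → multOf A t = 0 := by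
  set b := (μ₁ + μ₂) / 2 with hb
  set c := (μ₂ - μ₁) / 10 with hcdef
  have hc : c ≠ 0 := by
    rw [hcdef]
    intro hcon
    have : μ₂ - μ₁ = 0 := by linarith [hcon]
    linarith
  have hμ₁ : μ₁ = b - 5 * c := by rw [hb, hcdef]; ring
  have hμ₂ : μ₂ = b + 5 * c := by rw [hb, hcdef]; ring
  refine ⟨C4Aux.Amat b c, C4Aux.inS b c hc, C4Aux.ssp b c hc, ?_, ?_, ?_⟩
  · rw [hμ₁]; exact (C4Aux.mult_eq_two b c hc).1
  · rw [hμ₂]; exact (C4Aux.mult_eq_two b c hc).2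
  · intro t ht1 ht2
    exact C4Aux.mult_eq_zero b c t (hμ₁ ▸ ht1) (hμ₂ ▸ ht2)
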